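/- Let N be a finite state space, π the Gibbs distribution with parameter β ≥ 0 for utility U with range [U_min, U_max], and P the Metropolis chain with proposal probability 1/(2mn) to each neighbor and acceptance probability min(1, e^{β(U(j)−U(i))}). Let e = (M,M') be a transition with weight w_e = π(M)P(M,M'). Then for any states I, F and any state σ ∈ N, π(I)π(F) ≤ π(M)·π(σ)·e^{2β(U_max−U_min)}, and consequently π(I)π(F) ≤ 2mn·e^{3β(U_max−U_min)}·π(σ)·w_e. -/

import Mathlib

theorem metropolis_pair_bound {N : Type*} [Fintype N] [Nonempty N]
    (U : N → ℝ) (β Umin Umax : ℝ) (hβ : 0 ≤ β)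
    (hmax : IsGreatest (Set.range U) Umax) (hmin : IsLeast (Set.range U) Umin)
    (m n : ℕ) (hm : 0 < m) (hn : 0 < n)
    (π : N → ℝ)
    (hπ : ∀ M : N, π M = Real.exp (β * U M) / ∑ M' : N, Real.exp (β * U M'))
    (P : N → N → ℝ) (M M' : N)
    (hP : P M M' = (1 / (2 * (m : ℝ) * n)) * min 1 (Real.exp (β * (U M' - U M))))
    (w : ℝ) (hw : w = π M * P M M') :
    ∀ I F σ : N,
      π I * π F ≤ π M * π σ * Real.exp (2 * β * (Umax - Umin)) ∧
      π I * π F ≤ 2 * (m : ℝ) * n * Real.exp (3 * β * (Umax - Umin)) * π σ * w := by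
  intro I F σ
  set Z : ℝ := ∑ M' : N, Real.exp (β * U M') with hZ
  have hZpos : 0 < Z := Finset.sum_pos (fun i _ => Real.exp_pos _) Finset.univ_nonempty
  have hUmax : ∀ x : N, U x ≤ Umax := fun x => hmax.2 ⟨x, rfl⟩
  have hUmin : ∀ x : N, Umin ≤ U x := fun x => hmin.2 ⟨x, rfl⟩
  have hΔ : 0 ≤ β * (Umax - Umin) := by
    have := hUmax (Classical.arbitrary N); have := hUmin (Classical.arbitrary N)
    nlinarith
  have hexp : Real.exp (β * U I) * Real.exp (β * U F) ≤
      Real.exp (β * U M) * Real.exp (β * U σ) * Real.exp (2 * β * (Umax - Umin)) := by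
    rw [← Real.exp_add, ← Real.exp_add, ← Real.exp_add]
    apply Real.exp_le_exp.mpr
    have h1 := hUmax I; have h2 := hUmax F
    have h3 := hUmin M; have h4 := hUmin σ
    nlinarith
  have key : π I * π F ≤ π M * π σ * Real.exp (2 * β * (Umax - Umin)) := by
    rw [hπ I, hπ F, hπ M, hπ σ]
    rw [div_mul_div_comm, div_mul_div_comm, div_mul_eq_mul_div]
    gcongr
  refine ⟨key, ?_⟩
  have hπpos : ∀ x : N, 0 < π x := by
    intro x; rw [hπ x]; positivity
  have hPge : Real.exp (-(β * (Umax - Umin))) ≤ min 1 (Real.exp (β * (U M' - U M))) := by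
    apply le_min
    · exact Real.exp_le_one_iff.mpr (by linarith)
    · apply Real.exp_le_exp.mpr
      have h1 := hUmax M; have h2 := hUmin M'
      nlinarith
  have hmn : (0:ℝ) < 2 * (m:ℝ) * n := by positivity
  have hwge : π M * Real.exp (-(β * (Umax - Umin))) / (2 * (m:ℝ) * n) ≤ w := by
    rw [hw, hP, div_le_iff₀ hmn]
    have h1 := mul_le_mul_of_nonneg_left hPge (hπpos M).le
    have h2 : π M * (1 / (2 * (m:ℝ) * n) * min 1 (Real.exp (β * (U M' - U M)))) * (2 * (m:ℝ) * n)
        = π M * min 1 (Real.exp (β * (U M' - U M))) := by field_simp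
    linarith
  have he : Real.exp (3 * β * (Umax - Umin)) * Real.exp (-(β * (Umax - Umin)))
      = Real.exp (2 * β * (Umax - Umin)) := by
    rw [← Real.exp_add]; ring_nf
  calc π I * π F ≤ π M * π σ * Real.exp (2 * β * (Umax - Umin)) := key
    _ = 2 * (m:ℝ) * n * Real.exp (3 * β * (Umax - Umin)) * π σ *
        (π M * Real.exp (-(β * (Umax - Umin))) / (2 * (m:ℝ) * n)) := by
        field_simp
        ring_nf at he ⊢
        linear_combination (-(π σ * π M)) * he
    _ ≤ 2 * (m:ℝ) * n * Real.exp (3 * β * (Umax - Umin)) * π σ * w := by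
        exact mul_le_mul_of_nonneg_left hwge (mul_nonneg (by positivity) (hπpos σ).le)
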